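/- Let Ω be a topological space, g : Ω × Ω → ℝ a continuous function satisfying (g1) g(r,u) = 0 implies r = u, (g2) |g(r,u)| = |g(u,r)|, and (g3) |g(r,u)| ≤ |g(r,t)| + |g(t,u)| for all r, u, t ∈ Ω, R a binary relation on Ω, and S : Ω → Ω a map such that: (i) Ω is g-R-complete; (ii) R is S-closed; (iii) there exists r₀ ∈ Ω with (r₀, S r₀) ∈ R; (iv) R is g-self-closed; (v) there exists α ∈ (0,1) with |g(Sx, Sy)| ≤ α |g(x,y)| for all (x,y) ∈ R. Then S has a fixed point; moreover, for each r₀ ∈ Ω with (r₀, S r₀) ∈ R, the Picard sequence {Sⁿ r₀} g-converges to a fixed point of S. -/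

import Mathlib

open Filter

/-- Relation-theoretic Banach contraction principle in a topological space,
with the `g`-self-closedness assumption on `R`. -/
theorem relational_BCP_selfClosed {Ω : Type*} [TopologicalSpace Ω]
    (g : Ω × Ω → ℝ) (hg_cont : Continuous g)
    (hg1 : ∀ r u : Ω, g (r, u) = 0 → r = u)
    (hg2 : ∀ r u : Ω, |g (r, u)| = |g (u, r)|)
    (hg3 : ∀ r u t : Ω, |g (r, u)| ≤ |g (r, t)| + |g (t, u)|)
    (R : Ω → Ω → Prop) (S : Ω → Ω)
    -- (i) Ω is g-R-complete
    (hcomplete : ∀ r : ℕ → Ω, (∀ n, R (r n) (r (n + 1))) →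
      Tendsto (fun p : ℕ × ℕ => |g (r p.1, r p.2)|) atTop (nhds 0) →
      ∃ x : Ω, Tendsto (fun n => |g (r n, x)|) atTop (nhds 0))
    -- (ii) R is S-closed
    (hSclosed : ∀ x y : Ω, R x y → R (S x) (S y))
    -- (iii) Ω(S; R) is nonempty
    (hnonempty : ∃ r₀ : Ω, R r₀ (S r₀))
    -- (iv) R is g-self-closed
    (hselfClosed : ∀ (r : ℕ → Ω) (x : Ω), (∀ n, R (r n) (r (n + 1))) →
      Tendsto (fun n => |g (r n, x)|) atTop (nhds 0) →
      ∃ φ : ℕ → ℕ, StrictMono φ ∧ ∀ l : ℕ, R (r (φ l)) x)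
    -- (v) S is a topologically R-preserving contraction w.r.t. g
    (α : ℝ) (hα : α ∈ Set.Ioo (0 : ℝ) 1)
    (hcontr : ∀ x y : Ω, R x y → |g (S x, S y)| ≤ α * |g (x, y)|) :
    (∃ x : Ω, S x = x) ∧
      ∀ r₀ : Ω, R r₀ (S r₀) → ∃ x : Ω, S x = x ∧
        Tendsto (fun n => |g (S^[n] r₀, x)|) atTop (nhds 0) := by
  obtain ⟨hα0, hα1⟩ := hα
  have main : ∀ r₀ : Ω, R r₀ (S r₀) → ∃ x : Ω, S x = x ∧
      Tendsto (fun n => |g (S^[n] r₀, x)|) atTop (nhds 0) := by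
    intro r₀ h0
    set r : ℕ → Ω := fun n => S^[n] r₀ with hr
    have hrsucc : ∀ n, r (n + 1) = S (r n) := fun n => Function.iterate_succ_apply' S n r₀
    have hR : ∀ n, R (r n) (r (n + 1)) := by
      intro n
      induction n with
      | zero => simpa [r] using h0
      | succ n ih =>
        rw [hrsucc (n + 1), hrsucc n]
        rw [hrsucc n] at ih
        exact hSclosed _ _ ih
    set C := |g (r 0, r 1)| with hC
    have hCnn : 0 ≤ C := abs_nonneg _
    have hstep : ∀ n, |g (r n, r (n + 1))| ≤ α ^ n * C := by
      intro n
      induction n with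
      | zero => simp; exact hC.ge
      | succ n ih =>
        calc |g (r (n + 1), r (n + 1 + 1))| = |g (S (r n), S (r (n + 1)))| := by
              rw [hrsucc (n + 1), hrsucc n]
          _ ≤ α * |g (r n, r (n + 1))| := hcontr _ _ (hR n)
          _ ≤ α * (α ^ n * C) := mul_le_mul_of_nonneg_left ih hα0.le
          _ = α ^ (n + 1) * C := by ring
    have h1α : 0 < 1 - α := by linarith
    -- chain bound
    have hchain : ∀ m n, |g (r n, r (n + m))| ≤ 2 * (α ^ n * C) / (1 - α) := by
      intro m
      induction m with
      | zero =>
        intro n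
        simp only [Nat.add_zero]
        have h := hg3 (r n) (r n) (r (n + 1))
        rw [hg2 (r (n + 1)) (r n)] at h
        have hb := hstep n
        have hpow : 0 ≤ α ^ n * C := mul_nonneg (pow_nonneg hα0.le n) hCnn
        rw [le_div_iff₀ h1α]
        nlinarith [abs_nonneg (g (r n, r n))]
      | succ m ih =>
        intro n
        have h := hg3 (r n) (r (n + (m + 1))) (r (n + 1))
        have h2 : |g (r (n + 1), r (n + (m + 1)))| ≤ 2 * (α ^ (n + 1) * C) / (1 - α) := by
          have heq : n + (m + 1) = (n + 1) + m := by omega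
          rw [heq]
          exact ih (n + 1)
        have hb := hstep n
        have hpow : 0 ≤ α ^ n * C := mul_nonneg (pow_nonneg hα0.le n) hCnn
        have key : α ^ n * C + 2 * (α ^ (n + 1) * C) / (1 - α) ≤ 2 * (α ^ n * C) / (1 - α) := by
          have hE : 2 * (α ^ (n + 1) * C) / (1 - α) = α * (2 * (α ^ n * C) / (1 - α)) := by
            rw [pow_succ]
            field_simp
          have hED : (2 * (α ^ n * C) / (1 - α)) * (1 - α) = 2 * (α ^ n * C) :=
            div_mul_cancel₀ _ h1α.ne'
          rw [hE]
          nlinarith [hED, hpow]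
        linarith
    have hbound : ∀ n m, |g (r n, r m)| ≤ 2 * (α ^ min n m * C) / (1 - α) := by
      have base : ∀ n m, n ≤ m → |g (r n, r m)| ≤ 2 * (α ^ n * C) / (1 - α) := by
        intro n m hnm
        have := hchain (m - n) n
        rwa [Nat.add_sub_cancel' hnm] at this
      intro n m
      rcases le_total n m with h | h
      · rw [min_eq_left h]; exact base n m h
      · rw [min_eq_right h, hg2]; exact base m n h
    -- Cauchy
    have hmin : Tendsto (fun p : ℕ × ℕ => min p.1 p.2) atTop atTop := by
      rw [tendsto_atTop]
      intro b
      rw [eventually_atTop]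
      exact ⟨(b, b), fun p hp => le_min hp.1 hp.2⟩
    have hcauchy : Tendsto (fun p : ℕ × ℕ => |g (r p.1, r p.2)|) atTop (nhds 0) := by
      have hg0 : Tendsto (fun p : ℕ × ℕ => 2 * (α ^ min p.1 p.2 * C) / (1 - α)) atTop (nhds 0) := by
        have hp : Tendsto (fun p : ℕ × ℕ => α ^ min p.1 p.2) atTop (nhds 0) :=
          (tendsto_pow_atTop_nhds_zero_of_lt_one hα0.le hα1).comp hmin
        have := ((hp.const_mul 2).mul_const C).div_const (1 - α)
        simpa [mul_assoc] using this
      exact squeeze_zero (fun p => abs_nonneg _) (fun p => hbound p.1 p.2) hg0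
    obtain ⟨x, hx⟩ := hcomplete r hR hcauchy
    obtain ⟨φ, hφ, hφR⟩ := hselfClosed r x hR hx
    have hφtop : Tendsto φ atTop atTop := hφ.tendsto_atTop
    have hl1 : Tendsto (fun l => |g (r (φ l), x)|) atTop (nhds 0) := hx.comp hφtop
    have hφ1 : Tendsto (fun l => φ l + 1) atTop atTop :=
      tendsto_atTop_mono (fun l => Nat.le_succ (φ l)) hφtop
    have hl2 : Tendsto (fun l => |g (r (φ l + 1), x)|) atTop (nhds 0) := hx.comp hφ1
    have hfix : S x = x := by
      have hb : ∀ l, |g (x, S x)| ≤ |g (r (φ l + 1), x)| + α * |g (r (φ l), x)| := by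
        intro l
        have h := hg3 x (S x) (r (φ l + 1))
        have h2 : |g (r (φ l + 1), S x)| ≤ α * |g (r (φ l), x)| := by
          rw [hrsucc (φ l)]
          exact hcontr _ _ (hφR l)
        rw [hg2 x (r (φ l + 1))] at h
        linarith
      have htend : Tendsto (fun l => |g (r (φ l + 1), x)| + α * |g (r (φ l), x)|)
          atTop (nhds 0) := by
        have := hl2.add (hl1.const_mul α)
        simpa using this
      have hle : |g (x, S x)| ≤ 0 := ge_of_tendsto' htend hb
      have : g (x, S x) = 0 := abs_nonpos_iff.mp hle
      exact (hg1 _ _ this).symm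
    exact ⟨x, hfix, hx⟩
  obtain ⟨r₀, h0⟩ := hnonempty
  obtain ⟨x, hx, -⟩ := main r₀ h0
  exact ⟨⟨x, hx⟩, main⟩
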